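/- arXiv:2604.00638 — 4 statements merged into one kernel-verified Lean document; each statement's English description precedes it below -/
import Mathlib

section
/- Let n ≥ 3, a = (n-1)n/2, and S = ⟨a, a+1, a+2⟩. For a natural number r, write r = a·ℓ + ε with ℓ = ⌊r/a⌋ and 0 ≤ ε < a. Then r ∈ S if and only if ε ≤ 2ℓ. -/
/-- Membership in the numerical semigroup `⟨a, a+1, a+2⟩`, `a = (n-1)n/2`, `n ≥ 3`,
is characterized by `ε ≤ 2ℓ`, where `ℓ = ⌊r/a⌋` and `ε = r - aℓ`. -/
theorem stmt1 (n : ℕ) (hn : 3 ≤ n) (a : ℕ) (ha : a = (n - 1) * n / 2) (r : ℕ) :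
    (∃ α β γ : ℕ, α * a + β * (a + 1) + γ * (a + 2) = r) ↔ r % a ≤ 2 * (r / a) := by
  have ha3 : 3 ≤ a := by
    obtain ⟨m, rfl⟩ : ∃ m, n = m + 3 := ⟨n - 3, by omega⟩
    have h6 : 6 ≤ (m + 3 - 1) * (m + 3) := by
      have : (m + 3 - 1) * (m + 3) = (m + 2) * (m + 3) := by norm_num
      nlinarith
    omega
  constructor
  · rintro ⟨α, β, γ, hr⟩
    set m := α + β + γ with hm
    set s := β + 2 * γ with hs
    have hr' : r = s + m * a := by rw [hs, hm, ← hr]; ring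
    have h1 : r % a = s % a := by rw [hr', Nat.add_mul_mod_self_right]
    have h2 : r / a = s / a + m := by
      rw [hr', Nat.add_mul_div_right _ _ (by omega : 0 < a)]
    have h3 : s % a ≤ s := Nat.mod_le s a
    have h4 : s ≤ 2 * m := by omega
    rw [h1, h2]; exact le_trans (le_trans h3 h4) (Nat.mul_le_mul_left 2 (Nat.le_add_left m _))
  · intro h
    have hdm : a * (r / a) + r % a = r := Nat.div_add_mod r a
    refine ⟨r / a - r % a % 2 - r % a / 2, r % a % 2, r % a / 2, ?_⟩
    have hα : (r / a - r % a % 2 - r % a / 2) + r % a % 2 + r % a / 2 = r / a := by omega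
    have hε2 : r % a % 2 + 2 * (r % a / 2) = r % a := by omega
    calc (r / a - r % a % 2 - r % a / 2) * a + r % a % 2 * (a + 1) + r % a / 2 * (a + 2)
        = ((r / a - r % a % 2 - r % a / 2) + r % a % 2 + r % a / 2) * a
          + (r % a % 2 + 2 * (r % a / 2)) := by ring
      _ = a * (r / a) + r % a := by rw [hα, hε2, mul_comm]
      _ = r := hdm
end

section
/- Let n ≥ 3, a = (n-1)n/2, and S = ⟨a, a+1, a+2⟩. If r = a·u + v with natural numbers u, v satisfying 2u < v < a, then r ∉ S, and moreover u = ⌊r/a⌋ and v = r - a⌊r/a⌋. -/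
/-- If `r = a*u + v` with `2u < v < a`, then `r` does not belong to the numerical
semigroup `⟨a, a+1, a+2⟩` (with `a = (n-1)n/2`, `n ≥ 3`), and moreover `u` and `v`
are the quotient and remainder of the division of `r` by `a`. -/
theorem stmt2 (n : ℕ) (hn : 3 ≤ n) (a : ℕ) (ha : a = (n - 1) * n / 2)
    (u v r : ℕ) (h1 : 2 * u < v) (h2 : v < a) (hr : r = a * u + v) :
    (¬ ∃ α β γ : ℕ, α * a + β * (a + 1) + γ * (a + 2) = r) ∧ u = r / a ∧ v = r % a := by
  have hav : 0 < a := lt_of_le_of_lt (Nat.zero_le v) h2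
  refine ⟨?_, ?_, ?_⟩
  · rintro ⟨α, β, γ, h⟩
    have key : (α + β + γ) * a + (β + 2 * γ) = u * a + v := by
      have := h; rw [hr] at this; linarith [this.symm.trans (by ring : α * a + β * (a + 1) + γ * (a + 2) = (α + β + γ) * a + (β + 2 * γ))]
    rcases le_or_gt (α + β + γ) u with hs | hs
    · have h3 : (α + β + γ) * a ≤ u * a := Nat.mul_le_mul_right a hs
      have h4 : v ≤ β + 2 * γ := by omega
      omega
    · have h3 : (u + 1) * a ≤ (α + β + γ) * a := Nat.mul_le_mul_right a hs
      have h4 : u * a + v < (u + 1) * a := by nlinarith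
      omega
  · rw [hr, Nat.mul_add_div hav, Nat.div_eq_of_lt h2]; omega
  · rw [hr, Nat.mul_add_mod, Nat.mod_eq_of_lt h2]
end

section
/- Let n ≥ 6, a = (n-1)n/2, s₀ = a(n-1)+2, and S = ⟨a, a+1, a+2⟩. Then every integer r with s₀ ≤ r < s₀ + n belongs to S, and moreover ⌊r/a⌋ = n - 1 for all such r. -/
/-- For `n ≥ 6`, `a = (n-1)n/2`, `s₀ = a(n-1)+2`: every `r` with `s₀ ≤ r < s₀ + n`
belongs to the numerical semigroup `⟨a, a+1, a+2⟩`, and `⌊r/a⌋ = n - 1`. -/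
theorem stmt8 (n : ℕ) (hn : 6 ≤ n) (a s₀ : ℕ) (ha : a = (n - 1) * n / 2)
    (hs : s₀ = a * (n - 1) + 2) (r : ℕ) (h1 : s₀ ≤ r) (h2 : r < s₀ + n) :
    (∃ α β γ : ℕ, α * a + β * (a + 1) + γ * (a + 2) = r) ∧ r / a = n - 1 := by
  have heven : 2 ∣ (n - 1) * n := by
    have := Nat.even_mul_succ_self (n - 1)
    have hn1 : n - 1 + 1 = n := by omega
    rw [hn1] at this
    exact this.two_dvd
  have h2a : 2 * a = (n - 1) * n := by
    rw [ha, Nat.mul_div_cancel' heven]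
  have h5n : 5 * n ≤ (n - 1) * n := Nat.mul_le_mul_right n (by omega)
  have han : n + 2 ≤ a := by omega
  have key : ∀ α β γ : ℕ, α + β + γ = n - 1 → β + 2 * γ = r - a * (n - 1) →
      α * a + β * (a + 1) + γ * (a + 2) = r := by
    intro α β γ h3 h4
    have : α * a + β * (a + 1) + γ * (a + 2) = (α + β + γ) * a + (β + 2 * γ) := by ring
    rw [this, h3, h4]
    have hmc : (n - 1) * a = a * (n - 1) := Nat.mul_comm _ _
    omega
  constructor
  · set k := r - s₀ with hk
    by_cases hc : k + 2 ≤ n - 1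
    · exact ⟨n - 1 - (k + 2), k + 2, 0, key _ _ _ (by omega) (by omega)⟩
    · exact ⟨0, n - 1 - (k + 3 - n), k + 3 - n, key _ _ _ (by omega) (by omega)⟩
  · have hlo : (n - 1) * a ≤ r := by
      have : (n - 1) * a = a * (n - 1) := Nat.mul_comm _ _
      omega
    have hhi : r < (n - 1 + 1) * a := by
      have : (n - 1 + 1) * a = a * (n - 1) + a := by rw [Nat.succ_mul, Nat.mul_comm]
      omega
    exact Nat.div_eq_of_lt_le hlo hhi
end

section
/- Let k be a field and D = k[[t^{a}+t^{a+q}, t^{a+1}, t^{a+2}]] ⊆ k[[t]], where n ≥ 3, a = (n-1)n/2, q = 2⌊(n+1)/2⌋-1. Then the subring D[t] of k[[t]] generated by D and t equals k[[t]]. -/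
/-- Let `D = k[[tᵃ + t^{a+q}, t^{a+1}, t^{a+2}]] ⊆ k[[t]]`, the closed `k`-subalgebra
(topologically) generated by the three given elements, described here algebraically:
`f ∈ D` iff for every `m` there is `g` in the (algebraic) `k`-subalgebra generated by
the three elements with `f - g ∈ (t^m)`. Then the subring `D[t]` generated by `D`
together with `t` is all of `k[[t]]`. -/
theorem stmt18 (k : Type*) [Field k] (n : ℕ) (hn : 3 ≤ n) (a q : ℕ)
    (ha : a = (n - 1) * n / 2) (hq : q = 2 * ((n + 1) / 2) - 1)
    (D : Set (PowerSeries k))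
    (hD : D = {f : PowerSeries k | ∀ m : ℕ,
      ∃ g ∈ Algebra.adjoin k
        ({PowerSeries.X ^ a + PowerSeries.X ^ (a + q), PowerSeries.X ^ (a + 1),
          PowerSeries.X ^ (a + 2)} : Set (PowerSeries k)),
        f - g ∈ Ideal.span {(PowerSeries.X : PowerSeries k) ^ m}}) :
    Algebra.adjoin k (D ∪ {(PowerSeries.X : PowerSeries k)}) = ⊤ := by
  classical
  set M := a * (a + 1) with hM
  -- every j ≥ M is in the numerical semigroup ⟨a+1, a+2⟩
  have hsem : ∀ j, M ≤ j → ∃ x y : ℕ, j = (a + 1) * x + (a + 2) * y := by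
    intro j hj
    have hpos : 0 < a + 1 := Nat.succ_pos a
    have hrlt : j % (a + 1) < a + 1 := Nat.mod_lt _ hpos
    have hqge : a ≤ j / (a + 1) := by
      rw [Nat.le_div_iff_mul_le hpos]; exact hj
    obtain ⟨x, hx⟩ := Nat.exists_eq_add_of_le
      (le_trans (Nat.le_of_lt_succ hrlt) hqge)
    refine ⟨x, j % (a + 1), ?_⟩
    have hdm := Nat.div_add_mod j (a + 1)
    calc j = (a + 1) * (j / (a + 1)) + j % (a + 1) := hdm.symm
      _ = (a + 1) * (j % (a + 1) + x) + j % (a + 1) := by rw [hx]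
      _ = (a + 1) * x + (a + 2) * (j % (a + 1)) := by ring
  set S : Set (PowerSeries k) :=
    {PowerSeries.X ^ a + PowerSeries.X ^ (a + q), PowerSeries.X ^ (a + 1),
      PowerSeries.X ^ (a + 2)} with hS
  have hXj : ∀ j, M ≤ j → (PowerSeries.X : PowerSeries k) ^ j ∈ Algebra.adjoin k S := by
    intro j hj
    obtain ⟨x, y, hxy⟩ := hsem j hj
    rw [hxy, pow_add, pow_mul, pow_mul]
    exact mul_mem
      (pow_mem (Algebra.subset_adjoin (by simp [hS])) x)
      (pow_mem (Algebra.subset_adjoin (by simp [hS])) y)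
  -- coefficient of the truncation polynomial
  have hcoeff : ∀ (f : PowerSeries k) (m i : ℕ), i < m →
      PowerSeries.coeff i
        (∑ j ∈ Finset.range m,
          PowerSeries.C (PowerSeries.coeff j f) * PowerSeries.X ^ j)
        = PowerSeries.coeff i f := by
    intro f m i hi
    rw [map_sum]
    simp only [PowerSeries.coeff_C_mul, PowerSeries.coeff_X_pow]
    rw [Finset.sum_eq_single i]
    · simp
    · intro b _ hb; simp [Ne.symm hb]
    · intro h; exact absurd (Finset.mem_range.mpr hi) h
  -- any power series with vanishing coefficients below M lies in D
  have hDmem : ∀ h : PowerSeries k, (∀ j, j < M → PowerSeries.coeff j h = 0) → h ∈ D := by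
    intro h hh
    rw [hD]
    intro m
    refine ⟨∑ j ∈ Finset.range m,
      PowerSeries.C (PowerSeries.coeff j h) * PowerSeries.X ^ j, ?_, ?_⟩
    · apply Subalgebra.sum_mem
      intro j _
      by_cases hjM : M ≤ j
      · exact mul_mem (Subalgebra.algebraMap_mem _ _) (hXj j hjM)
      · rw [hh j (lt_of_not_ge hjM)]
        simp only [map_zero, zero_mul]
        exact zero_mem _
    · rw [Ideal.mem_span_singleton, PowerSeries.X_pow_dvd_iff]
      intro i hi
      rw [map_sub, hcoeff h m i hi, sub_self]
  -- main proof
  rw [eq_top_iff]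
  rintro f -
  have hXmem : (PowerSeries.X : PowerSeries k) ∈ Algebra.adjoin k (D ∪ {PowerSeries.X}) :=
    Algebra.subset_adjoin (Or.inr rfl)
  set P : PowerSeries k := ∑ j ∈ Finset.range M,
    PowerSeries.C (PowerSeries.coeff j f) * PowerSeries.X ^ j with hP
  have hPmem : P ∈ Algebra.adjoin k (D ∪ {PowerSeries.X}) := by
    apply Subalgebra.sum_mem
    intro j _
    exact mul_mem (Subalgebra.algebraMap_mem _ _) (pow_mem hXmem j)
  have hfP : f - P ∈ D := by
    apply hDmem
    intro j hj
    rw [map_sub, hcoeff f M j hj, sub_self]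
  have : f = P + (f - P) := by ring
  rw [this]
  exact add_mem hPmem (Algebra.subset_adjoin (Or.inl hfP))
end
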